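/- Let α ∈ ℝ, p ∈ ℂ, r > 0, and let u be analytic on the punctured disc {z ∈ ℂ : 0 < |z − p| < r} and satisfy u''(z) = 2u(z)³ + z·u(z) − α there, with a simple pole at p of residue +1, i.e. (z − p)·u(z) → 1 as z → p. Then the function f(z) := 2u(z)² − 2u'(z) + z has a double pole at p with leading coefficient 4; that is, (z − p)²·f(z) → 4 as z → p. In particular, f(z) ≠ 0 for all z sufficiently close to p, and along the real axis f(x) → +∞ as x → p (when p ∈ ℝ and u is real on the real axis). -/

import Mathlib

open Filter Topology Set Metric

/-- The auxiliary function `f(z) = 2 u(z)^2 - 2 u'(z) + z` appearing in the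
Bäcklund transformation for Painlevé II, in the complex setting. -/
noncomputable def piiFC (u : ℂ → ℂ) : ℂ → ℂ :=
  fun z => 2 * (u z) ^ 2 - 2 * deriv u z + z

/-- if `u` solves Painlevé II on a punctured disc around `p`
with a simple pole of residue `+1` at `p`, then `f = 2 u^2 - 2 u' + z` has a
double pole at `p` with leading coefficient `4`: `(z-p)^2 f(z) → 4`.  In
particular `f` is nonvanishing near `p`, and if `p` is real and `u` is real
on the real axis then `f(x) → +∞` as `x → p` along the reals. -/
theorem piiFC_double_pole (α : ℝ) (p : ℂ) (r : ℝ) (hr : 0 < r)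
    (u : ℂ → ℂ) (hu : AnalyticOnNhd ℂ u (ball p r \ {p}))
    (hPII : ∀ z ∈ ball p r \ {p},
      deriv (deriv u) z = 2 * (u z) ^ 3 + z * u z - (α : ℂ))
    (hpole : Tendsto (fun z => (z - p) * u z) (𝓝[≠] p) (𝓝 1)) :
    Tendsto (fun z => (z - p) ^ 2 * piiFC u z) (𝓝[≠] p) (𝓝 4) ∧
    (∀ᶠ z in 𝓝[≠] p, piiFC u z ≠ 0) ∧
    (p.im = 0 → (∀ x : ℝ, (x : ℂ) ∈ ball p r \ {p} → (u (x : ℂ)).im = 0) →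
      Tendsto (fun x : ℝ => (piiFC u (x : ℂ)).re) (𝓝[≠] p.re) atTop) := by
  set g : ℂ → ℂ := fun z => (z - p) * u z with hg
  set h : ℂ → ℂ := Function.update g p 1 with hh
  have hne : ∀ᶠ z in 𝓝[≠] p, z ∈ ball p r \ {p} := by
    filter_upwards [mem_nhdsWithin_of_mem_nhds (ball_mem_nhds p hr),
      self_mem_nhdsWithin] with z hz hz' using ⟨hz, hz'⟩
  have hhg : ∀ z : ℂ, z ≠ p → h z = g z := fun z hz => Function.update_of_ne hz _ _
  have hdiff : ∀ z ∈ ball p r \ {p}, DifferentiableAt ℂ g z := by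
    intro z hz
    exact (differentiableAt_id.sub_const p).mul (hu z hz).differentiableAt
  have hgh : ∀ z : ℂ, z ≠ p → h =ᶠ[𝓝 z] g := by
    intro z hz
    filter_upwards [isOpen_compl_singleton.mem_nhds (show z ∈ ({p}ᶜ : Set ℂ) from hz)]
      with w hw using hhg w hw
  have hdiffh : ∀ᶠ z in 𝓝[≠] p, DifferentiableAt ℂ h z := by
    filter_upwards [hne] with z hz
    exact (hdiff z hz).congr_of_eventuallyEq (hgh z hz.2)
  have hcont : ContinuousAt h p := by
    have h1 : Tendsto h (𝓝[≠] p) (𝓝 1) := by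
      refine hpole.congr' ?_
      filter_upwards [self_mem_nhdsWithin] with z hz using (hhg z hz).symm
    have h2 : Tendsto h (pure p) (𝓝 1) := by
      have : h p = 1 := by simp [hh]
      rw [tendsto_pure_left]
      intro s hs; rw [this]; exact mem_of_mem_nhds hs
    have h3 := h1.sup h2
    rw [nhdsNE_sup_pure] at h3
    have hp1 : h p = 1 := by simp [hh]
    rw [ContinuousAt, hp1]
    exact h3
  have hanal : AnalyticAt ℂ h p :=
    Complex.analyticAt_of_differentiable_on_punctured_nhds_of_continuousAt hdiffh hcont
  have hp1 : h p = 1 := by simp [hh]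
  have hht : Tendsto h (𝓝[≠] p) (𝓝 1) := by
    have := hcont.tendsto; rw [hp1] at this
    exact this.mono_left nhdsWithin_le_nhds
  have hderivh : Tendsto (fun z => (z - p) * deriv h z) (𝓝[≠] p) (𝓝 0) := by
    have hd0 : ContinuousAt (fun z => fderiv ℂ h z 1) p :=
      ((ContinuousLinearMap.apply ℂ ℂ (1:ℂ)).continuous.continuousAt).comp
        hanal.fderiv.continuousAt
    have hd : ContinuousAt (deriv h) p := by
      simpa only [fderiv_apply_one_eq_deriv] using hd0
    have : Tendsto (fun z => (z - p) * deriv h z) (𝓝 p) (𝓝 ((p - p) * deriv h p)) :=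
      ((continuous_id.sub continuous_const).continuousAt).mul hd
    simpa using this.mono_left nhdsWithin_le_nhds
  have hderiv_eq : ∀ z ∈ ball p r \ {p}, deriv h z = u z + (z - p) * deriv u z := by
    intro z hz
    rw [(hgh z hz.2).deriv_eq]
    have h1 : HasDerivAt (fun w => w - p) 1 z := (hasDerivAt_id z).sub_const p
    have h2 : HasDerivAt u (deriv u z) z := ((hu z hz).differentiableAt).hasDerivAt
    rw [show g = (fun w => w - p) * u from rfl, (h1.mul h2).deriv]; ring
  have key : Tendsto (fun z => (z - p) ^ 2 * piiFC u z) (𝓝[≠] p) (𝓝 4) := by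
    have l1 : Tendsto (fun z : ℂ => (z - p) ^ 2 * z) (𝓝[≠] p) (𝓝 0) := by
      have : Tendsto (fun z : ℂ => (z - p) ^ 2 * z) (𝓝 p) (𝓝 ((p - p) ^ 2 * p)) :=
        (((continuous_id.sub continuous_const).pow 2).mul continuous_id).continuousAt
      simpa using this.mono_left nhdsWithin_le_nhds
    have lim : Tendsto (fun z => 2 * (h z) ^ 2 - 2 * ((z - p) * deriv h z - h z)
        + (z - p) ^ 2 * z) (𝓝[≠] p) (𝓝 (2 * 1 ^ 2 - 2 * (0 - 1) + 0)) :=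
      (((hht.pow 2).const_mul 2).sub ((hderivh.sub hht).const_mul 2)).add l1
    have lim4 : Tendsto (fun z => 2 * (h z) ^ 2 - 2 * ((z - p) * deriv h z - h z)
        + (z - p) ^ 2 * z) (𝓝[≠] p) (𝓝 4) := by
      convert lim using 2; norm_num
    refine lim4.congr' ?_
    filter_upwards [hne] with z hz
    have e1 : h z = (z - p) * u z := hhg z hz.2
    have e2 : deriv h z = u z + (z - p) * deriv u z := hderiv_eq z hz
    simp only [piiFC, e1, e2]; ring
  refine ⟨key, ?_, ?_⟩
  · filter_upwards [key.eventually_ne (by norm_num : (4:ℂ) ≠ 0)] with z hz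
    intro hf; exact hz (by simp [piiFC] at hf ⊢; simp [hf])
  · intro hpim hureal
    have hpre : (p.re : ℂ) = p := Complex.ext (by simp) (by simp [hpim])
    have hmap : Tendsto (fun x : ℝ => (x : ℂ)) (𝓝[≠] p.re) (𝓝[≠] p) := by
      rw [tendsto_nhdsWithin_iff]
      constructor
      · have h1 : Tendsto (fun x : ℝ => (x : ℂ)) (𝓝 p.re) (𝓝 p) := by
          simpa [hpre] using (Complex.continuous_ofReal.tendsto p.re)
        exact h1.mono_left nhdsWithin_le_nhds
      · filter_upwards [self_mem_nhdsWithin] with x hx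
        simp only [mem_compl_iff, mem_singleton_iff] at hx ⊢
        intro hc; apply hx
        rw [← hpre] at hc; exact_mod_cast hc
    have knum : Tendsto (fun x : ℝ => ((((x:ℂ) - p) ^ 2 * piiFC u (x:ℂ)).re))
        (𝓝[≠] p.re) (𝓝 4) := by
      have h1 := (Complex.continuous_re.tendsto (4:ℂ)).comp (key.comp hmap)
      simpa [Function.comp_def] using h1
    have hreal : ∀ᶠ x : ℝ in 𝓝[≠] p.re,
        (piiFC u (x:ℂ)).re = (((x:ℂ) - p) ^ 2 * piiFC u (x:ℂ)).re * ((x - p.re) ^ 2)⁻¹ := by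
      filter_upwards [self_mem_nhdsWithin] with x hx'
      have hxne : x ≠ p.re := hx'
      have hx0 : (x - p.re) ≠ 0 := sub_ne_zero.2 hxne
      have e : ((x:ℂ) - p) ^ 2 = (((x - p.re) ^ 2 : ℝ) : ℂ) := by
        push_cast [hpre]; ring
      rw [e, Complex.re_ofReal_mul]
      field_simp
    have hinv : Tendsto (fun x : ℝ => ((x - p.re) ^ 2)⁻¹) (𝓝[≠] p.re) atTop := by
      apply Filter.Tendsto.inv_tendsto_nhdsGT_zero
      rw [tendsto_nhdsWithin_iff]
      constructor
      · have : Tendsto (fun x : ℝ => (x - p.re) ^ 2) (𝓝 p.re) (𝓝 ((p.re - p.re) ^ 2)) :=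
          ((continuous_id.sub continuous_const).pow 2).continuousAt
        simpa using this.mono_left nhdsWithin_le_nhds
      · filter_upwards [self_mem_nhdsWithin] with x hx
        have hx0 : (x - p.re) ≠ 0 := sub_ne_zero.2 hx
        exact mem_Ioi.2 (sq_pos_iff.2 hx0)
    have hfin := knum.pos_mul_atTop (by norm_num : (0:ℝ) < 4) hinv
    exact hfin.congr' (by filter_upwards [hreal] with x hx using hx.symm)
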